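/- Let ε > 0, δ ∈ (0,1), and k = ⌈(1/ε)·ln((e^ε + 2δ − 1)/((e^ε + 1)δ))⌉. Let X be a random variable on ℤ with the k-truncated symmetric geometric distribution of parameter p = 1 − e^{−ε}, i.e., P[X = x] = c·e^{−|x|ε} for |x| ≤ k, with c = (1 − e^{−ε})/(1 + e^{−ε} − 2e^{−(k+1)ε}). Then P[X = k] ≤ δ. -/
import Mathlib


open Real

theorem tsgd_tail_mass_le_delta
    (ε δ : ℝ) (hε : 0 < ε) (hδ0 : 0 < δ) (hδ1 : δ < 1)
    (k : ℤ)
    (hk : k = ⌈(1 / ε) * Real.log ((exp ε + 2 * δ - 1) / ((exp ε + 1) * δ))⌉) :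
    ((1 - exp (-ε)) / (1 + exp (-ε) - 2 * exp (-((k : ℝ) + 1) * ε))) *
      exp (-(k : ℝ) * ε) ≤ δ := by
  have he1 : (1:ℝ) < exp ε := by
    have := Real.add_one_le_exp ε; linarith
  have ht0 : 0 < exp (-ε) := exp_pos _
  have ht1 : exp (-ε) < 1 := by
    rw [exp_lt_one_iff]; linarith
  have het : exp ε * exp (-ε) = 1 := by
    rw [← Real.exp_add]; simp
  have hden0 : 0 < (exp ε + 1) * δ := by positivity
  have hnum0 : 0 < exp ε + 2 * δ - 1 := by linarith
  have hA1 : 1 < (exp ε + 2 * δ - 1) / ((exp ε + 1) * δ) := by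
    rw [lt_div_iff₀ hden0]; nlinarith
  have hA0 : 0 < (exp ε + 2 * δ - 1) / ((exp ε + 1) * δ) := by linarith
  have hk1 : (1:ℤ) ≤ k := by
    rw [hk]
    have : 0 < (1 / ε) * Real.log ((exp ε + 2 * δ - 1) / ((exp ε + 1) * δ)) := by
      have := Real.log_pos hA1
      positivity
    exact Int.ceil_pos.mpr this
  have hkR : (1/ε) * Real.log ((exp ε + 2 * δ - 1) / ((exp ε + 1) * δ)) ≤ (k:ℝ) := by
    rw [hk]; exact Int.le_ceil _
  have hεk : Real.log ((exp ε + 2 * δ - 1) / ((exp ε + 1) * δ)) ≤ (k:ℝ) * ε := by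
    have := mul_le_mul_of_nonneg_right hkR (le_of_lt hε)
    rw [one_div, inv_mul_eq_div, div_mul_cancel₀] at this
    · linarith
    · exact ne_of_gt hε
  have hexp : (exp ε + 2 * δ - 1) / ((exp ε + 1) * δ) ≤ exp ((k:ℝ) * ε) := by
    calc (exp ε + 2 * δ - 1) / ((exp ε + 1) * δ)
        = exp (Real.log ((exp ε + 2 * δ - 1) / ((exp ε + 1) * δ))) := (Real.exp_log hA0).symm
      _ ≤ exp ((k:ℝ) * ε) := Real.exp_le_exp.mpr hεk
  have hu : exp (-(k:ℝ) * ε) ≤ ((exp ε + 1) * δ) / (exp ε + 2 * δ - 1) := by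
    rw [le_div_iff₀ hnum0]
    have h1 : exp (-(k:ℝ) * ε) * exp ((k:ℝ) * ε) = 1 := by
      rw [← Real.exp_add]; ring_nf; simp
    have h2 : exp (-(k:ℝ) * ε) * ((exp ε + 2 * δ - 1) / ((exp ε + 1) * δ)) ≤
        exp (-(k:ℝ) * ε) * exp ((k:ℝ) * ε) :=
      mul_le_mul_of_nonneg_left hexp (exp_pos _).le
    rw [h1, ← mul_div_assoc, div_le_one hden0] at h2
    exact h2
  have hu1 : exp (-(k:ℝ) * ε) ≤ 1 := by
    apply Real.exp_le_one_iff.mpr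
    have : (1:ℝ) ≤ (k:ℝ) := by exact_mod_cast hk1
    nlinarith
  have hsplit : exp (-((k:ℝ) + 1) * ε) = exp (-(k:ℝ) * ε) * exp (-ε) := by
    rw [← Real.exp_add]; ring_nf
  set t := exp (-ε) with htdef
  set u := exp (-(k:ℝ) * ε) with hudef
  have hu0 : 0 < u := exp_pos _
  rw [hsplit]
  have hD : 0 < 1 + t - 2 * (u * t) := by nlinarith
  rw [div_mul_eq_mul_div, div_le_iff₀ hD]
  -- key: u * (exp ε + 2δ - 1) ≤ (exp ε + 1) * δ, multiply by t, use exp ε * t = 1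
  have hkey : u * (exp ε + 2 * δ - 1) ≤ (exp ε + 1) * δ := by
    rw [le_div_iff₀ hnum0] at hu; linarith
  nlinarith [mul_le_mul_of_nonneg_right hkey ht0.le]
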